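/- Let L ≥ 1 be a natural number and Q an L×L generator matrix. Let Ī₀ : [0,∞) → ℝ^L and Ā : [0,∞) → ℝ^L be continuous, and let Ī⁰, Ī¹ : [0,∞)×[0,∞) → ℝ^L be continuous (all row-vector valued). Suppose Ī : [0,∞)×[0,∞) → ℝ^L is continuous and satisfies, for all t, 𝔞 ≥ 0, Ī(t,𝔞) = Ī₀((𝔞−t)⁺) − Ī⁰(t,𝔞) + Ā(t) − Ā((t−𝔞)⁺) − Ī¹(t,𝔞) + ∫_{(t−𝔞)⁺}^{t} Ī(s, 𝔞−(t−s))·Q ds. Then for all t, 𝔞 ≥ 0, Ī(t,𝔞) = Ī₀((𝔞−t)⁺) − Ī⁰(t,𝔞) + Ā(t) − Ā((t−𝔞)⁺) − Ī¹(t,𝔞) + ∫_{(t−𝔞)⁺}^{t} [ Ī₀((𝔞−t)⁺) − Ī⁰(s, 𝔞−t+s) + Ā(s) − Ā((t−𝔞)⁺) − Ī¹(s, 𝔞−t+s) ]·Q·exp((t−s)Q) ds. -/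

import Mathlib

open Matrix intervalIntegral Set

/-- `Q` is the generator matrix of a continuous-time Markov chain on `Fin L`:
nonnegative off-diagonal entries and zero row sums. -/
def IsGeneratorMatrix {L : ℕ} (Q : Matrix (Fin L) (Fin L) ℝ) : Prop :=
  (∀ i j, i ≠ j → 0 ≤ Q i j) ∧ ∀ i, ∑ j, Q i j = 0

section AuxVolterra

private lemma volterra_abstract {R : Type*} [NormedRing R] [NormedAlgebra ℝ R] [CompleteSpace R]
    (Q : R) (b t : ℝ) (hbt : b ≤ t) (Φ Ψ : ℝ → R)
    (hΦ : Continuous Φ) (hΨ : Continuous Ψ)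
    (heq : ∀ s ∈ Icc b t, Φ s = Ψ s + ∫ u in b..s, Φ u * Q) :
    (∫ u in b..t, Φ u * Q)
      = ∫ u in b..t, Ψ u * Q * NormedSpace.exp ((t - u) • Q) := by
  set E : ℝ → R := fun s => NormedSpace.exp ((t - s) • Q) with hEdef
  have hE : ∀ s : ℝ, HasDerivAt E (-(Q * E s)) s := by
    intro s
    have h1 : HasDerivAt (fun u : ℝ => NormedSpace.exp (u • Q))
        (Q * NormedSpace.exp ((t - s) • Q)) (t - s) :=
      hasDerivAt_exp_smul_const' Q (t - s)
    have h2 : HasDerivAt (fun u : ℝ => t - u) (-1) s := by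
      simpa using (hasDerivAt_id s).const_sub t
    have h3 := h1.scomp s h2
    simpa [hEdef, Function.comp_def] using h3
  have hEc : Continuous E := by
    rw [continuous_iff_continuousAt]; exact fun s => (hE s).continuousAt
  have hΦQ : Continuous fun u => Φ u * Q := hΦ.mul continuous_const
  set F : ℝ → R := fun s => ∫ u in b..s, Φ u * Q with hFdef
  have hF : ∀ s : ℝ, HasDerivAt F (Φ s * Q) s := fun s =>
    intervalIntegral.integral_hasDerivAt_right (hΦQ.intervalIntegrable _ _)
      (hΦQ.stronglyMeasurableAtFilter _ _) hΦQ.continuousAt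
  have hΨQE : Continuous fun u => Ψ u * Q * E u := (hΨ.mul continuous_const).mul hEc
  set G : ℝ → R := fun s => ∫ u in b..s, Ψ u * Q * E u with hGdef
  have hG : ∀ s : ℝ, HasDerivAt G (Ψ s * Q * E s) s := fun s =>
    intervalIntegral.integral_hasDerivAt_right (hΨQE.intervalIntegrable _ _)
      (hΨQE.stronglyMeasurableAtFilter _ _) hΨQE.continuousAt
  set H : ℝ → R := fun s => F s * E s - G s with hHdef
  have hHc : Continuous H := by
    have hFc : Continuous F := by
      rw [continuous_iff_continuousAt]; exact fun s => (hF s).continuousAt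
    have hGc : Continuous G := by
      rw [continuous_iff_continuousAt]; exact fun s => (hG s).continuousAt
    exact (hFc.mul hEc).sub hGc
  have key : ∀ x ∈ Icc b t, H x = H b := by
    apply constant_of_has_deriv_right_zero hHc.continuousOn
    intro x hx
    have hd : HasDerivAt H (Φ x * Q * E x + F x * -(Q * E x) - Ψ x * Q * E x) x :=
      ((hF x).mul (hE x)).sub (hG x)
    have hΦx : Φ x = Ψ x + F x := heq x (Ico_subset_Icc_self hx)
    have hzero : Φ x * Q * E x + F x * -(Q * E x) - Ψ x * Q * E x = 0 := by
      rw [hΦx]; noncomm_ring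
    rw [hzero] at hd
    exact hd.hasDerivWithinAt
  have hHb : H b = 0 := by
    simp [hHdef, hFdef, hGdef, intervalIntegral.integral_same]
  have hHt : H t = 0 := (key t ⟨hbt, le_rfl⟩).trans hHb
  have hEt : E t = 1 := by
    simp [hEdef, NormedSpace.exp_zero]
  have : F t * E t - G t = 0 := hHt
  rw [hEt, mul_one, sub_eq_zero] at this
  exact this

section MatrixInst

attribute [local instance] Matrix.linftyOpNormedAddCommGroup Matrix.linftyOpNormedRing
  Matrix.linftyOpNormedAlgebra

lemma volterra_vec (L : ℕ) (hL : 1 ≤ L) (Q : Matrix (Fin L) (Fin L) ℝ)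
    (b t : ℝ) (hbt : b ≤ t) (f g : ℝ → Fin L → ℝ)
    (hf : Continuous f) (hg : Continuous g)
    (heq : ∀ s ∈ Icc b t, f s = g s + ∫ u in b..s, f u ᵥ* Q) :
    (∫ u in b..t, f u ᵥ* Q)
      = ∫ u in b..t, (g u ᵥ* Q) ᵥ* NormedSpace.exp ((t - u) • Q) := by
  classical
  let ρl : (Fin L → ℝ) →ₗ[ℝ] Matrix (Fin L) (Fin L) ℝ :=
    { toFun := fun v => Matrix.of fun _ j => v j
      map_add' := fun x y => rfl
      map_smul' := fun c x => rfl }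
  let ρ : (Fin L → ℝ) →L[ℝ] Matrix (Fin L) (Fin L) ℝ := LinearMap.toContinuousLinearMap ρl
  let i0 : Fin L := ⟨0, hL⟩
  let πl : Matrix (Fin L) (Fin L) ℝ →ₗ[ℝ] (Fin L → ℝ) :=
    { toFun := fun M => M i0
      map_add' := fun x y => rfl
      map_smul' := fun c x => rfl }
  let π : Matrix (Fin L) (Fin L) ℝ →L[ℝ] (Fin L → ℝ) := LinearMap.toContinuousLinearMap πl
  have hρmul : ∀ (v : Fin L → ℝ) (M : Matrix (Fin L) (Fin L) ℝ), ρ (v ᵥ* M) = ρ v * M := by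
    intro v M
    ext i j
    simp [ρ, ρl, Matrix.mul_apply, Matrix.vecMul, dotProduct, LinearMap.coe_mk, AddHom.coe_mk]
    rfl
  have hπ : ∀ (v : Fin L → ℝ) (M : Matrix (Fin L) (Fin L) ℝ), π (ρ v * M) = v ᵥ* M := by
    intro v M
    funext j
    simp [π, πl, ρ, ρl, Matrix.mul_apply, Matrix.vecMul, dotProduct, LinearMap.coe_mk, AddHom.coe_mk]
    rfl
  have hvQ : Continuous fun u => f u ᵥ* Q := by
    have := (LinearMap.toContinuousLinearMap (Matrix.vecMulLinear Q)).continuous.comp hf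
    exact this
  have hgQ : Continuous fun u => g u ᵥ* Q := by
    have := (LinearMap.toContinuousLinearMap (Matrix.vecMulLinear Q)).continuous.comp hg
    exact this
  have heqM : ∀ s ∈ Icc b t, (fun u => ρ (f u)) s = (fun u => ρ (g u)) s
      + ∫ u in b..s, ρ (f u) * Q := by
    intro s hs
    have h1 : ρ (f s) = ρ (g s) + ρ (∫ u in b..s, f u ᵥ* Q) := by
      rw [heq s hs, map_add]
    simp only []
    rw [h1]
    congr 1
    refine (ρ.intervalIntegral_comp_comm (hvQ.intervalIntegrable _ _)).symm.trans ?_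
    exact intervalIntegral.integral_congr fun u _ => hρmul _ _
  have hkey := volterra_abstract Q b t hbt (fun u => ρ (f u)) (fun u => ρ (g u))
    (ρ.continuous.comp hf) (ρ.continuous.comp hg) heqM
  have hEc : Continuous fun u : ℝ => NormedSpace.exp ((t - u) • Q) :=
    NormedSpace.exp_continuous.comp (((continuous_const.sub continuous_id).smul continuous_const))
  have hL1 : Continuous fun u => ρ (f u) * Q := (ρ.continuous.comp hf).mul continuous_const
  have hL2 : Continuous fun u => ρ (g u) * Q * NormedSpace.exp ((t - u) • Q) :=
    ((ρ.continuous.comp hg).mul continuous_const).mul hEc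
  calc (∫ u in b..t, f u ᵥ* Q)
      = ∫ u in b..t, π (ρ (f u) * Q) := intervalIntegral.integral_congr fun u _ => (hπ _ _).symm
    _ = π (∫ u in b..t, ρ (f u) * Q) := π.intervalIntegral_comp_comm (hL1.intervalIntegrable _ _)
    _ = π (∫ u in b..t, ρ (g u) * Q * NormedSpace.exp ((t - u) • Q)) := by exact congrArg π hkey
    _ = ∫ u in b..t, π (ρ (g u) * Q * NormedSpace.exp ((t - u) • Q)) :=
        (π.intervalIntegral_comp_comm (hL2.intervalIntegrable _ _)).symm
    _ = ∫ u in b..t, (g u ᵥ* Q) ᵥ* NormedSpace.exp ((t - u) • Q) := by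
        refine intervalIntegral.integral_congr fun u _ => ?_
        rw [mul_assoc, hπ, ← Matrix.vecMul_vecMul]

end MatrixInst

end AuxVolterra

/-- **Lemma 4.7.** Explicit formula for the FLLN limit `Ī(t,𝔞)` in terms of the
inhomogeneous terms of the Volterra equation it satisfies. -/
theorem limit_mfI_explicit_formula
    (L : ℕ) (hL : 1 ≤ L) (Q : Matrix (Fin L) (Fin L) ℝ) (hQ : IsGeneratorMatrix Q)
    (I₀ A : ℝ → Fin L → ℝ)
    (hI₀ : ContinuousOn I₀ (Ici 0)) (hA : ContinuousOn A (Ici 0))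
    (I0 I1 : ℝ → ℝ → Fin L → ℝ)
    (hI0 : ContinuousOn (fun p : ℝ × ℝ => I0 p.1 p.2) (Ici 0 ×ˢ Ici 0))
    (hI1 : ContinuousOn (fun p : ℝ × ℝ => I1 p.1 p.2) (Ici 0 ×ˢ Ici 0))
    (I : ℝ → ℝ → Fin L → ℝ)
    (hI : ContinuousOn (fun p : ℝ × ℝ => I p.1 p.2) (Ici 0 ×ˢ Ici 0))
    (heq : ∀ t ≥ (0:ℝ), ∀ 𝔞 ≥ (0:ℝ),
      I t 𝔞 = I₀ (max (𝔞 - t) 0) - I0 t 𝔞 + A t - A (max (t - 𝔞) 0) - I1 t 𝔞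
        + ∫ s in (max (t - 𝔞) 0)..t, (I s (𝔞 - (t - s))) ᵥ* Q) :
    ∀ t ≥ (0:ℝ), ∀ 𝔞 ≥ (0:ℝ),
      I t 𝔞 = I₀ (max (𝔞 - t) 0) - I0 t 𝔞 + A t - A (max (t - 𝔞) 0) - I1 t 𝔞
        + ∫ s in (max (t - 𝔞) 0)..t,
            ((I₀ (max (𝔞 - t) 0) - I0 s (𝔞 - t + s) + A s - A (max (t - 𝔞) 0)
                - I1 s (𝔞 - t + s)) ᵥ* Q) ᵥ* NormedSpace.exp ((t - s) • Q) := by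
  intro t ht 𝔞 ha
  set b : ℝ := max (t - 𝔞) 0 with hbdef
  have hb0 : (0:ℝ) ≤ b := le_max_right _ _
  have hbt : b ≤ t := max_le (by linarith) ht
  have hbta : t - 𝔞 ≤ b := le_max_left _ _
  set f : ℝ → Fin L → ℝ := fun s => I (max s b) (𝔞 - t + max s b) with hfdef
  set g : ℝ → Fin L → ℝ := fun s =>
    I₀ (max (𝔞 - t) 0) - I0 (max s b) (𝔞 - t + max s b) + A (max s b) - A b
      - I1 (max s b) (𝔞 - t + max s b) with hgdef
  have hmax : Continuous fun s : ℝ => max s b := continuous_id.max continuous_const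
  have hpair : Continuous fun s : ℝ => ((max s b, 𝔞 - t + max s b) : ℝ × ℝ) :=
    hmax.prodMk (continuous_const.add hmax)
  have hmem : ∀ s : ℝ, ((max s b, 𝔞 - t + max s b) : ℝ × ℝ) ∈ Ici (0:ℝ) ×ˢ Ici (0:ℝ) := by
    intro s
    constructor
    · exact le_trans hb0 (le_max_right s b)
    · have : t - 𝔞 ≤ max s b := le_trans hbta (le_max_right s b)
      simp only [mem_Ici]; linarith
  have hf : Continuous f := hI.comp_continuous hpair hmem
  have hg : Continuous g := by
    have h0 : Continuous fun s : ℝ => I0 (max s b) (𝔞 - t + max s b) :=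
      hI0.comp_continuous hpair hmem
    have h1 : Continuous fun s : ℝ => I1 (max s b) (𝔞 - t + max s b) :=
      hI1.comp_continuous hpair hmem
    have hAc : Continuous fun s : ℝ => A (max s b) :=
      hA.comp_continuous hmax fun s => le_trans hb0 (le_max_right s b)
    exact ((((continuous_const.sub h0).add hAc).sub continuous_const).sub h1)
  have heqf : ∀ s ∈ Icc b t, f s = g s + ∫ u in b..s, f u ᵥ* Q := by
    intro s hs
    have hsb : max s b = s := max_eq_left hs.1
    have hs0 : (0:ℝ) ≤ s := hb0.trans hs.1
    have ha0 : (0:ℝ) ≤ 𝔞 - t + s := by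
      have : t - 𝔞 ≤ s := hbta.trans hs.1
      linarith
    have hthis := heq s hs0 (𝔞 - t + s) ha0
    have e1 : 𝔞 - t + s - s = 𝔞 - t := by ring
    have e2 : s - (𝔞 - t + s) = t - 𝔞 := by ring
    rw [e1, e2] at hthis
    have hint : (∫ u in b..s, I u (𝔞 - t + s - (s - u)) ᵥ* Q)
        = ∫ u in b..s, f u ᵥ* Q := by
      refine intervalIntegral.integral_congr fun u hu => ?_
      rw [Set.uIcc_of_le hs.1] at hu
      have hub : max u b = u := max_eq_left hu.1
      simp only [hfdef, hub]
      congr 1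
      ring
    simp only [hfdef, hgdef, hsb]
    rw [hthis, ← hbdef, hint]
  have hkey := volterra_vec L hL Q b t hbt f g hf hg heqf
  rw [heq t ht 𝔞 ha]
  congr 1
  have hlhs : (∫ s in b..t, I s (𝔞 - (t - s)) ᵥ* Q) = ∫ s in b..t, f s ᵥ* Q := by
    refine intervalIntegral.integral_congr fun u hu => ?_
    rw [Set.uIcc_of_le hbt] at hu
    have hub : max u b = u := max_eq_left hu.1
    simp only [hfdef, hub]
    congr 1
    ring
  rw [hlhs, hkey]
  refine intervalIntegral.integral_congr fun u hu => ?_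
  rw [Set.uIcc_of_le hbt] at hu
  have hub : max u b = u := max_eq_left hu.1
  simp only [hgdef, hub]
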